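/- For β = π/2 − ε with ε → 0⁺, sin β = cos ε = 1 − ε²/2 + O(ε⁴), whereas γ_β = 2 sin(β/(4 − 2β/π)) = 1 − 4ε/(3√3) + O(ε²). Hence for all sufficiently small ε > 0, γ_β < sin β, i.e., the Beckermann–Goreinov–Tyrtyshnikov convergence factor is strictly smaller than the classical Elman factor. -/

import Mathlib

open Real Filter Asymptotics

private lemma abs_sin_sub_self (x : ℝ) (hx : |x| ≤ 1) :
    |Real.sin x - x| ≤ |x| ^ 3 := by
  have h := Real.sin_bound hx
  have h2 : |Real.sin x - x| ≤ |Real.sin x - (x - x ^ 3 / 6)| + |x ^ 3 / 6| := by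
    calc |Real.sin x - x| = |(Real.sin x - (x - x ^ 3 / 6)) + (-(x ^ 3 / 6))| := by ring_nf
      _ ≤ |Real.sin x - (x - x ^ 3 / 6)| + |(-(x ^ 3 / 6))| := abs_add_le _ _
      _ = |Real.sin x - (x - x ^ 3 / 6)| + |x ^ 3 / 6| := by rw [abs_neg]
  have h3 : |x ^ 3 / 6| = |x| ^ 3 / 6 := by
    rw [abs_div, abs_pow]; norm_num
  have h4 : |x| ^ 4 ≤ |x| ^ 3 := pow_le_pow_of_le_one (abs_nonneg x) hx (by norm_num)
  linarith [pow_nonneg (abs_nonneg x) 3, pow_le_pow_of_le_one (abs_nonneg x) hx (by norm_num : 3 ≤ 5)]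

private lemma abs_cos_sub_one (x : ℝ) : |Real.cos x - 1| ≤ x ^ 2 / 2 := by
  have h1 := Real.one_sub_sq_div_two_le_cos (x := x)
  have h2 := Real.cos_le_one x
  rw [abs_le]; constructor <;> nlinarith

private lemma arg_eq (ε : ℝ) (hε : 0 < ε) :
    (π / 2 - ε) / (4 - 2 * (π / 2 - ε) / π) = π / 6 + (-(4 * π * ε) / (3 * (3 * π + 2 * ε))) := by
  have hπ : 0 < π := Real.pi_pos
  have hden : (0:ℝ) < 3 * π + 2 * ε := by linarith
  have h4 : 4 - 2 * (π / 2 - ε) / π = (3 * π + 2 * ε) / π := by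
    field_simp; ring
  rw [h4, div_div_eq_mul_div]
  rw [div_add_div _ _ (by norm_num) (by positivity : (3:ℝ) * (3 * π + 2 * ε) ≠ 0),
    div_eq_div_iff hden.ne' (by positivity)]
  ring

set_option maxHeartbeats 1000000 in
/-- Key quantitative bound. -/
private lemma key_bound (ε : ℝ) (h0 : 0 < ε) (h1 : ε ≤ 1) :
    |2 * Real.sin ((π / 2 - ε) / (4 - 2 * (π / 2 - ε) / π))
      - (1 - 4 * ε / (3 * Real.sqrt 3))| ≤ 4 * ε ^ 2 := by
  have hπ : 0 < π := Real.pi_pos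
  have hπ3 : (3:ℝ) < π := by linarith [Real.pi_gt_three]
  have hden : 0 < 3 * π + 2 * ε := by linarith
  set δ : ℝ := -(4 * π * ε) / (3 * (3 * π + 2 * ε)) with hδ
  have hrw := arg_eq ε h0
  have hnum : (0:ℝ) < 4 * π * ε := by positivity
  have hδneg : δ < 0 := div_neg_of_neg_of_pos (by linarith) (by linarith)
  have hδabs : |δ| ≤ 4 * ε / 9 := by
    rw [abs_of_neg hδneg, hδ, neg_div, neg_neg,
      div_le_div_iff₀ (by linarith) (by norm_num)]
    nlinarith
  have hδ1 : |δ| ≤ 1 := by linarith [hδabs]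
  have hδε : |δ| ≤ ε := by linarith [hδabs]
  have hsin : 2 * Real.sin (π / 6 + δ) = Real.cos δ + Real.sqrt 3 * Real.sin δ := by
    rw [Real.sin_add, Real.sin_pi_div_six, Real.cos_pi_div_six]
    ring
  have hs3 : Real.sqrt 3 ^ 2 = 3 := Real.sq_sqrt (by norm_num)
  have hs3pos : 1 ≤ Real.sqrt 3 := by nlinarith [Real.sqrt_nonneg 3]
  have hs3lt : Real.sqrt 3 ≤ 2 := by nlinarith [Real.sqrt_nonneg 3]
  have hinv : 4 * ε / (3 * Real.sqrt 3) = 4 * Real.sqrt 3 * ε / 9 := by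
    rw [div_eq_div_iff (by positivity) (by norm_num)]
    linear_combination (-12 * ε) * hs3
  have hplain : δ + 4 * ε / 9 = 8 * ε ^ 2 / (9 * (3 * π + 2 * ε)) := by
    rw [hδ]; field_simp; ring
  have hthird : Real.sqrt 3 * δ + 4 * ε / (3 * Real.sqrt 3)
      = 8 * Real.sqrt 3 * ε ^ 2 / (9 * (3 * π + 2 * ε)) := by
    rw [hinv]
    have h9 : (0:ℝ) < 9 * (3 * π + 2 * ε) := by linarith
    rw [show Real.sqrt 3 * δ + 4 * Real.sqrt 3 * ε / 9 = Real.sqrt 3 * (δ + 4 * ε / 9) by ring, hplain]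
    ring
  have hthird_bound : |8 * Real.sqrt 3 * ε ^ 2 / (9 * (3 * π + 2 * ε))| ≤ ε ^ 2 := by
    rw [abs_of_nonneg (by positivity), div_le_iff₀ (by linarith)]
    nlinarith
  have hcb := abs_cos_sub_one δ
  have hsb := abs_sin_sub_self δ hδ1
  have hδsq : δ ^ 2 ≤ ε ^ 2 := by nlinarith [abs_nonneg δ, sq_abs δ]
  have hδcube : |δ| ^ 3 ≤ ε ^ 2 := by
    calc |δ| ^ 3 ≤ ε ^ 3 := pow_le_pow_left₀ (abs_nonneg δ) hδε 3
      _ ≤ ε ^ 2 := by nlinarith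
  rw [hrw, hsin]
  have hdecomp : Real.cos δ + Real.sqrt 3 * Real.sin δ - (1 - 4 * ε / (3 * Real.sqrt 3))
      = (Real.cos δ - 1) + Real.sqrt 3 * (Real.sin δ - δ)
        + (Real.sqrt 3 * δ + 4 * ε / (3 * Real.sqrt 3)) := by ring
  rw [hdecomp, hthird]
  have hmul : |Real.sqrt 3 * (Real.sin δ - δ)| ≤ 2 * ε ^ 2 := by
    rw [abs_mul, abs_of_nonneg (Real.sqrt_nonneg 3)]
    nlinarith [abs_nonneg (Real.sin δ - δ)]
  calc |(Real.cos δ - 1) + Real.sqrt 3 * (Real.sin δ - δ)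
        + 8 * Real.sqrt 3 * ε ^ 2 / (9 * (3 * π + 2 * ε))|
      ≤ |Real.cos δ - 1| + |Real.sqrt 3 * (Real.sin δ - δ)|
        + |8 * Real.sqrt 3 * ε ^ 2 / (9 * (3 * π + 2 * ε))| := abs_add_three _ _ _
    _ ≤ ε ^ 2 / 2 + 2 * ε ^ 2 + ε ^ 2 := by
        have : |Real.cos δ - 1| ≤ ε ^ 2 / 2 := by linarith
        linarith
    _ ≤ 4 * ε ^ 2 := by nlinarith

theorem stmt12 :
    (∀ ε : ℝ, Real.sin (π / 2 - ε) = Real.cos ε) ∧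
    (fun ε : ℝ => Real.cos ε - (1 - ε ^ 2 / 2))
      =O[nhdsWithin 0 (Set.Ioi 0)] (fun ε : ℝ => ε ^ 4) ∧
    (fun ε : ℝ =>
        2 * Real.sin ((π / 2 - ε) / (4 - 2 * (π / 2 - ε) / π))
          - (1 - 4 * ε / (3 * Real.sqrt 3)))
      =O[nhdsWithin 0 (Set.Ioi 0)] (fun ε : ℝ => ε ^ 2) ∧
    ∃ ε₁ > (0:ℝ), ∀ ε : ℝ, 0 < ε → ε ≤ ε₁ →
      2 * Real.sin ((π / 2 - ε) / (4 - 2 * (π / 2 - ε) / π)) < Real.sin (π / 2 - ε) := by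
  refine ⟨fun ε => Real.sin_pi_div_two_sub ε, ?_, ?_, ?_⟩
  · rw [Asymptotics.isBigO_iff]
    refine ⟨5 / 96, ?_⟩
    filter_upwards [Ioo_mem_nhdsGT (one_pos : (0:ℝ) < 1)] with x hx
    have hx1 : |x| ≤ 1 := by
      rw [abs_le]; exact ⟨by linarith [hx.1], le_of_lt hx.2⟩
    have := Real.cos_bound hx1
    simp only [Real.norm_eq_abs]
    calc |Real.cos x - (1 - x ^ 2 / 2)| ≤ |x| ^ 4 * (5 / 96) := this
      _ = 5 / 96 * |x ^ 4| := by rw [abs_pow]; ring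
  · rw [Asymptotics.isBigO_iff]
    refine ⟨4, ?_⟩
    filter_upwards [Ioo_mem_nhdsGT (one_pos : (0:ℝ) < 1)] with x hx
    have := key_bound x hx.1 (le_of_lt hx.2)
    simp only [Real.norm_eq_abs]
    calc |2 * Real.sin ((π / 2 - x) / (4 - 2 * (π / 2 - x) / π)) - (1 - 4 * x / (3 * Real.sqrt 3))|
        ≤ 4 * x ^ 2 := this
      _ = 4 * |x ^ 2| := by rw [abs_of_nonneg (sq_nonneg x)]
  · refine ⟨1 / 10, by norm_num, fun ε h0 h1 => ?_⟩
    have hkey := key_bound ε h0 (by linarith)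
    have hcos : 1 - ε ^ 2 / 2 ≤ Real.cos ε := Real.one_sub_sq_div_two_le_cos
    rw [Real.sin_pi_div_two_sub]
    have hub : 2 * Real.sin ((π / 2 - ε) / (4 - 2 * (π / 2 - ε) / π))
        ≤ 1 - 4 * ε / (3 * Real.sqrt 3) + 4 * ε ^ 2 := by
      have := (abs_le.1 hkey).2
      linarith
    have hs3 : Real.sqrt 3 ^ 2 = 3 := Real.sq_sqrt (by norm_num)
    have hs3pos : 1 ≤ Real.sqrt 3 := by nlinarith [Real.sqrt_nonneg 3]
    have hs3lt : Real.sqrt 3 ≤ 7 / 4 := by nlinarith [Real.sqrt_nonneg 3]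
    have h4 : 4 * ε / (3 * (7 / 4)) ≤ 4 * ε / (3 * Real.sqrt 3) :=
      div_le_div_of_nonneg_left (by linarith) (by positivity) (by linarith)
    have hfinal : 1 - 4 * ε / (3 * Real.sqrt 3) + 4 * ε ^ 2 < 1 - ε ^ 2 / 2 := by
      have h5 : 4 * ε / (3 * (7 / 4)) = 16 * ε / 21 := by ring
      rw [h5] at h4
      nlinarith
    linarith
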